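/- In the heterogeneous regret game with two groups — players 1, …, m regret averse with common coefficient κ > 0 and players m+1, …, N regret neutral with coefficient 0, where 1 ≤ m ≤ N−1 — the profile a* in which every regret averse player chooses safe and every regret neutral player chooses risky is a pure strategy Nash equilibrium if and only if v ≥ 1/p and v ≤ (1/p)·(1 + κ·(1 − p·(1 − q(N−m)))) / (1 + q(N−m)·κ). -/
import Mathlib


namespace RegretGame

/-- An action in the regret game: choose the risky lottery or the safe lottery. -/
inductive Act : Type
  | risky : Act
  | safe : Act
deriving DecidableEq, Repr

/-- `numRisky a i` is the number of players other than `i` choosing the risky lottery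
at the action profile `a`. -/
def numRisky {N : ℕ} (a : Fin N → Act) (i : Fin N) : ℕ :=
  (Finset.univ.filter (fun j => j ≠ i ∧ a j = Act.risky)).card

/-- Player `i`'s expected payoff in the heterogeneous regret game at action profile
`a`, where player `i` has her own coefficient of regret aversion `κ i`. -/
noncomputable def payoffHet {N : ℕ} (p v : ℝ) (κ : Fin N → ℝ) (q : ℕ → ℝ)
    (a : Fin N → Act) (i : Fin N) : ℝ :=
  if a i = Act.risky then p * v - (1 - p) * κ i
  else 1 - p * q (numRisky a i) * κ i * (v - 1)

/-- A pure strategy Nash equilibrium of the heterogeneous regret game: no player can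
strictly increase her expected payoff by unilaterally changing her own action. -/
def IsNashHet {N : ℕ} (p v : ℝ) (κ : Fin N → ℝ) (q : ℕ → ℝ) (a : Fin N → Act) : Prop :=
  ∀ (i : Fin N) (b : Act),
    payoffHet p v κ q (Function.update a i b) i ≤ payoffHet p v κ q a i

lemma numRisky_update {N : ℕ} (a : Fin N → Act) (i : Fin N) (b : Act) :
    numRisky (Function.update a i b) i = numRisky a i := by
  unfold numRisky
  congr 1
  apply Finset.filter_congr
  intro j _
  by_cases h : j = i
  · simp [h]
  · simp [h, Function.update_of_ne h]

lemma card_ge {N m : ℕ} (hmN : m < N) :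
    (Finset.univ.filter (fun j : Fin N => m ≤ (j : ℕ))).card = N - m := by
  have : Finset.univ.filter (fun j : Fin N => m ≤ (j : ℕ)) = Finset.Ici (⟨m, hmN⟩ : Fin N) := by
    ext j
    simp [Fin.le_def]
  rw [this, Fin.card_Ici]

lemma numRisky_star {N m : ℕ} (hmN : m < N) (i : Fin N) :
    numRisky (fun j : Fin N => if (j : ℕ) < m then Act.safe else Act.risky) i
      = if (i : ℕ) < m then N - m else N - m - 1 := by
  unfold numRisky
  have hset : ∀ j : Fin N, ((if (j : ℕ) < m then Act.safe else Act.risky) = Act.risky)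
      ↔ m ≤ (j : ℕ) := by
    intro j
    by_cases h : (j : ℕ) < m <;> simp [h] <;> omega
  by_cases hi : (i : ℕ) < m
  · rw [if_pos hi]
    have : Finset.univ.filter (fun j : Fin N => j ≠ i ∧
        (if (j : ℕ) < m then Act.safe else Act.risky) = Act.risky)
        = Finset.univ.filter (fun j : Fin N => m ≤ (j : ℕ)) := by
      ext j
      simp only [Finset.mem_filter, Finset.mem_univ, true_and, hset]
      constructor
      · exact fun h => h.2
      · intro h
        refine ⟨fun hji => ?_, h⟩
        subst hji; omega
    rw [this, card_ge hmN]
  · rw [if_neg hi]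
    have : Finset.univ.filter (fun j : Fin N => j ≠ i ∧
        (if (j : ℕ) < m then Act.safe else Act.risky) = Act.risky)
        = (Finset.univ.filter (fun j : Fin N => m ≤ (j : ℕ))).erase i := by
      ext j
      simp only [Finset.mem_filter, Finset.mem_univ, true_and, hset, Finset.mem_erase]
    have hmem : i ∈ Finset.univ.filter (fun j : Fin N => m ≤ (j : ℕ)) :=
      Finset.mem_filter.mpr ⟨Finset.mem_univ _, Nat.le_of_not_lt hi⟩
    rw [this, Finset.card_erase_of_mem hmem, card_ge hmN]



/-- Two-group heterogeneous regret game: players `0, …, m−1` are regret averse with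
common coefficient `κ > 0` and players `m, …, N−1` are regret neutral (coefficient
`0`), with `1 ≤ m ≤ N−1`. The profile `a*` in which every regret averse player
chooses safe and every regret neutral player chooses risky is a pure strategy Nash
equilibrium if and only if
`v ≥ 1/p` and `v ≤ (1/p)·(1 + κ·(1 − p·(1 − q(N−m)))) / (1 + q(N−m)·κ)`. -/
theorem regret_game_two_groups_mixed_profile_nash_iff
    (N m : ℕ) (hN : 2 ≤ N) (hm1 : 1 ≤ m) (hmN : m ≤ N - 1)
    (p v : ℝ) (hp : 0 < p ∧ p < 1) (hv : 1 < v)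
    (κ : ℝ) (hκ : 0 < κ)
    (q : ℕ → ℝ)
    (hq01 : ∀ m' ≤ N - 1, 0 ≤ q m' ∧ q m' ≤ 1)
    (hq0 : q 0 = 0) (hqN : q (N - 1) = 1)
    (hqmono : ∀ m₁ m₂, m₁ < m₂ → m₂ ≤ N - 1 → q m₁ < q m₂) :
    IsNashHet p v (fun i : Fin N => if (i : ℕ) < m then κ else 0) q
        (fun i : Fin N => if (i : ℕ) < m then Act.safe else Act.risky) ↔
      (v ≥ 1 / p ∧
        v ≤ (1 / p) * (1 + κ * (1 - p * (1 - q (N - m)))) / (1 + q (N - m) * κ)) := by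
  obtain ⟨hp0, hp1⟩ := hp
  have hmlt : m < N := by omega
  have hNm : N - m ≤ N - 1 := by omega
  have hQ0 : 0 ≤ q (N - m) := (hq01 _ hNm).1
  have hden : (0:ℝ) < 1 + q (N - m) * κ := by nlinarith
  have hrisky_iff : ((1:ℝ) ≤ p * v) ↔ v ≥ 1 / p := by
    rw [ge_iff_le, div_le_iff₀ hp0]
    constructor <;> intro h <;> nlinarith
  have hsafe_iff : (p * v - (1 - p) * κ ≤ 1 - p * q (N - m) * κ * (v - 1)) ↔
      v ≤ (1 / p) * (1 + κ * (1 - p * (1 - q (N - m)))) / (1 + q (N - m) * κ) := by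
    rw [le_div_iff₀ hden, one_div, inv_mul_eq_div, le_div_iff₀ hp0]
    constructor <;> intro h <;> nlinarith
  constructor
  · intro hnash
    constructor
    · rw [← hrisky_iff]
      have h := hnash ⟨m, hmlt⟩ Act.safe
      simp only [payoffHet, Function.update_self, lt_irrefl, if_false, if_neg,
        Fin.val_mk] at h
      simpa using h
    · rw [← hsafe_iff]
      have h := hnash ⟨0, by omega⟩ Act.risky
      have h0m : (0:ℕ) < m := hm1
      simp only [payoffHet, Function.update_self, Fin.val_mk, if_pos h0m,
        numRisky_update, numRisky_star hmlt] at h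
      simpa [h0m] using h
  · rintro ⟨h1, h2⟩ i b
    rw [← hrisky_iff] at h1
    rw [← hsafe_iff] at h2
    by_cases hi : (i : ℕ) < m
    · cases b with
      | risky =>
        simp only [payoffHet, Function.update_self, numRisky_update,
          numRisky_star hmlt, if_pos hi] at *
        simpa [hi] using h2
      | safe =>
        simp only [payoffHet, Function.update_self, numRisky_update,
          numRisky_star hmlt, if_pos hi]
        simp [hi]
    · cases b with
      | risky =>
        simp only [payoffHet, Function.update_self, if_neg hi]
        simp [hi]
      | safe =>
        simp only [payoffHet, Function.update_self, if_neg hi]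
        simp [hi]
        nlinarith

end RegretGame
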